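/- Let n ≥ 1 and let x, y ∈ Bⁿ. Then there exists a point w on the unit sphere Sⁿ⁻¹ such that |x−w|·|w−y| ≤ 1 − (|x−y|/2)²; in particular inf_{w ∈ Sⁿ⁻¹} |x−w|·|w−y| ≤ 1. -/

import Mathlib

open Real

set_option maxHeartbeats 1000000 in
lemma aux_key {E : Type*} [NormedAddCommGroup E] [InnerProductSpace ℝ E]
    (x y : E) (hx : ‖x‖ < 1) (hy : ‖y‖ < 1) (hxy : x ≠ y) (hyx : ‖y‖ ≤ ‖x‖) :
    ∃ w : E, ‖w‖ = 1 ∧ dist x w * dist w y ≤ 1 - (dist x y / 2) ^ 2 := by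
  obtain ⟨u, hu_def⟩ : ∃ u : E, u = x - y := ⟨_, rfl⟩
  have hu : u ≠ 0 := by rw [hu_def]; exact sub_ne_zero.mpr hxy
  have hun : (0:ℝ) < ‖u‖ := norm_pos_iff.mpr hu
  obtain ⟨a, ha_def⟩ : ∃ a : E, a = ‖u‖⁻¹ • u := ⟨_, rfl⟩
  have ha : ‖a‖ = 1 := by
    rw [ha_def, norm_smul, norm_inv, norm_norm, inv_mul_cancel₀ hun.ne']
  obtain ⟨m, hm_def⟩ : ∃ m : E, m = (2:ℝ)⁻¹ • (x + y) := ⟨_, rfl⟩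
  obtain ⟨r, hr_def⟩ : ∃ r : ℝ, r = ‖u‖ / 2 := ⟨_, rfl⟩
  have hr0 : 0 < r := by rw [hr_def]; positivity
  obtain ⟨c, hc_def⟩ : ∃ c : ℝ, c = (inner ℝ m a : ℝ) := ⟨_, rfl⟩
  have hxm : x = m + r • a := by
    rw [ha_def, hm_def, hr_def, smul_smul, div_mul_eq_mul_div,
      mul_inv_cancel₀ hun.ne', hu_def]
    match_scalars <;> ring
  have hym : y = m - r • a := by
    rw [ha_def, hm_def, hr_def, smul_smul, div_mul_eq_mul_div,
      mul_inv_cancel₀ hun.ne', hu_def]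
    match_scalars <;> ring
  have hra : ‖r • a‖ = r := by
    rw [norm_smul, Real.norm_eq_abs, abs_of_pos hr0, ha, mul_one]
  have hnx2 : ‖x‖^2 = ‖m‖^2 + 2*r*c + r^2 := by
    rw [hxm, norm_add_sq_real, real_inner_smul_right, hra, ← hc_def]
    ring
  have hny2 : ‖y‖^2 = ‖m‖^2 - 2*r*c + r^2 := by
    rw [hym, norm_sub_sq_real, real_inner_smul_right, hra, ← hc_def]
    ring
  have hxy2 : ‖y‖^2 ≤ ‖x‖^2 := pow_le_pow_left₀ (norm_nonneg y) hyx 2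
  have h4rc : 0 ≤ 4*(r*c) := by nlinarith [hnx2, hny2, hxy2]
  have hc0 : 0 ≤ c := by nlinarith [h4rc, hr0]
  have hx1 : ‖x‖^2 < 1 := by nlinarith [norm_nonneg x]
  have hy1 : ‖y‖^2 < 1 := by nlinarith [norm_nonneg y]
  have hm1 : ‖m‖^2 < 1 := by nlinarith
  obtain ⟨k, hk_def⟩ : ∃ k : ℝ, k = 1 - ‖m‖^2 := ⟨_, rfl⟩
  have hk0 : 0 < k := by rw [hk_def]; linarith
  obtain ⟨s, hs_def⟩ : ∃ s : ℝ, s = Real.sqrt (c^2 + k) := ⟨_, rfl⟩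
  have hs2 : s^2 = c^2 + k := by rw [hs_def]; exact Real.sq_sqrt (by positivity)
  have hs0 : 0 ≤ s := by rw [hs_def]; exact Real.sqrt_nonneg _
  obtain ⟨l, hl_def⟩ : ∃ l : ℝ, l = s - c := ⟨_, rfl⟩
  have hcs : c ≤ s := by
    rw [hs_def, ← Real.sqrt_sq hc0]
    exact Real.sqrt_le_sqrt (by rw [Real.sq_sqrt (sq_nonneg c)]; linarith)
  have hl0 : 0 ≤ l := by rw [hl_def]; linarith
  have hkey : l^2 + 2*c*l = k := by rw [hl_def]; linear_combination hs2
  have h1 : (r+c)^2 < s^2 := by nlinarith [hs2, hnx2, hx1]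
  have h2 : r + c < s := lt_of_pow_lt_pow_left₀ 2 hs0 h1
  have hrl : r < l := by rw [hl_def]; linarith
  have hcl : 0 ≤ 2*c*l := by positivity
  have hk1 : k ≤ 1 := by rw [hk_def]; nlinarith [sq_nonneg ‖m‖]
  have hl1 : l^2 ≤ 1 := by linarith
  refine ⟨m + l • a, ?_, ?_⟩
  · have hla : ‖l • a‖ = l := by
      rw [norm_smul, Real.norm_eq_abs, abs_of_nonneg hl0, ha, mul_one]
    have hw2 : ‖m + l • a‖^2 = 1 := by
      rw [norm_add_sq_real, real_inner_smul_right, hla, ← hc_def, hk_def] at *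
      linarith [hkey]
    nlinarith [norm_nonneg (m + l • a)]
  · have hdxw : dist x (m + l • a) = l - r := by
      rw [dist_eq_norm, hxm]
      have h1 : m + r • a - (m + l • a) = (r - l) • a := by module
      rw [h1, norm_smul, Real.norm_eq_abs, ha, mul_one, abs_of_nonpos (by linarith)]
      ring
    have hdwy : dist (m + l • a) y = l + r := by
      rw [dist_eq_norm, hym]
      have h1 : m + l • a - (m - r • a) = (l + r) • a := by module
      rw [h1, norm_smul, Real.norm_eq_abs, ha, mul_one, abs_of_nonneg (by linarith)]
    have hdxy : dist x y = 2 * r := by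
      rw [dist_eq_norm, ← hu_def, hr_def]; ring
    rw [hdxw, hdwy, hdxy]
    nlinarith

/-- for `x, y ∈ Bⁿ` there is `w` on the unit sphere with
`|x−w|·|w−y| ≤ 1 − (|x−y|/2)²`; in particular `inf_{w ∈ Sⁿ⁻¹} |x−w|·|w−y| ≤ 1`. -/
theorem exists_sphere_point_mul_dist_le (n : ℕ) (hn : 1 ≤ n)
    (x y : EuclideanSpace ℝ (Fin n))
    (hx : x ∈ Metric.ball (0 : EuclideanSpace ℝ (Fin n)) 1)
    (hy : y ∈ Metric.ball (0 : EuclideanSpace ℝ (Fin n)) 1) :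
    (∃ w ∈ Metric.sphere (0 : EuclideanSpace ℝ (Fin n)) 1,
      dist x w * dist w y ≤ 1 - (dist x y / 2) ^ 2) ∧
    sInf ((fun w => dist x w * dist w y) ''
      Metric.sphere (0 : EuclideanSpace ℝ (Fin n)) 1) ≤ 1 := by
  rw [Metric.mem_ball, dist_zero_right] at hx hy
  have hmain : ∃ w ∈ Metric.sphere (0 : EuclideanSpace ℝ (Fin n)) 1,
      dist x w * dist w y ≤ 1 - (dist x y / 2) ^ 2 := by
    by_cases hxy : x = y
    · subst hxy
      rcases eq_or_ne x 0 with h0 | h0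
      · refine ⟨EuclideanSpace.single ⟨0, hn⟩ (1:ℝ), ?_, ?_⟩
        · rw [mem_sphere_zero_iff_norm, EuclideanSpace.norm_single, norm_one]
        · subst h0
          simp [dist_eq_norm, EuclideanSpace.norm_single]
      · refine ⟨‖x‖⁻¹ • x, ?_, ?_⟩
        · rw [mem_sphere_zero_iff_norm, norm_smul, norm_inv, norm_norm,
            inv_mul_cancel₀ (norm_ne_zero_iff.mpr h0)]
        · have hxp : (0:ℝ) < ‖x‖ := norm_pos_iff.mpr h0
          have hd : dist x (‖x‖⁻¹ • x) = 1 - ‖x‖ := by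
            rw [dist_eq_norm]
            have h1 : x - ‖x‖⁻¹ • x = (1 - ‖x‖⁻¹) • x := by module
            rw [h1, norm_smul, Real.norm_eq_abs,
              abs_of_nonpos (by rw [sub_nonpos]; exact one_le_inv_iff₀.mpr ⟨hxp, le_of_lt hx⟩)]
            field_simp
            ring
          rw [dist_comm (‖x‖⁻¹ • x) x, hd]
          simp only [dist_self]
          nlinarith [norm_nonneg x]
    · rcases le_total ‖y‖ ‖x‖ with h | h
      · obtain ⟨w, hw1, hw2⟩ := aux_key x y hx hy hxy h
        exact ⟨w, mem_sphere_zero_iff_norm.mpr hw1, hw2⟩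
      · obtain ⟨w, hw1, hw2⟩ := aux_key y x hy hx (Ne.symm hxy) h
        refine ⟨w, mem_sphere_zero_iff_norm.mpr hw1, ?_⟩
        rw [dist_comm x w, dist_comm w y, mul_comm, dist_comm x y]
        exact hw2
  refine ⟨hmain, ?_⟩
  obtain ⟨w, hw, hwle⟩ := hmain
  have hbdd : BddBelow ((fun w => dist x w * dist w y) ''
      Metric.sphere (0 : EuclideanSpace ℝ (Fin n)) 1) := by
    refine ⟨0, ?_⟩
    rintro _ ⟨v, _, rfl⟩
    exact mul_nonneg dist_nonneg dist_nonneg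
  refine le_trans (csInf_le hbdd ⟨w, hw, rfl⟩) ?_
  show dist x w * dist w y ≤ 1
  nlinarith [hwle, sq_nonneg (dist x y / 2)]
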